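/- For τ ∈ ℕ, let N_τ be the set of nonincreasing vectors in ℕ^n with total sum τ, partially ordered by majorization. For any x, y ∈ N_τ, the vector z defined recursively by partial sums S_k(z) = min{S_k(x), S_k(y)} (where S_k denotes the sum of the first k entries) is an element of N_τ and is the infimum of {x, y} in (N_τ, ≺). -/

import Mathlib

open Finset

/-- Nondecreasing rearrangement of a finite vector. -/
def sortAsc {n : ℕ} {α : Type*} [LinearOrder α] (x : Fin n → α) : Fin n → α :=
  x ∘ Tuple.sort x

/-- Nonincreasing rearrangement of a finite vector. -/
def sortDesc {n : ℕ} {α : Type*} [LinearOrder α] (x : Fin n → α) : Fin n → α :=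
  fun i => sortAsc x i.rev

/-- Sum of the entries of `f` at positions `< k`. -/
def psum {n : ℕ} {α : Type*} [AddCommMonoid α] (f : Fin n → α) (k : ℕ) : α :=
  ∑ i : Fin n, if (i : ℕ) < k then f i else 0

/-- `x` is majorized by `y`: every partial sum of the `k` largest entries of `x`
is at most that of `y`, and the total sums agree. -/
def Maj {n : ℕ} {α : Type*} [AddCommMonoid α] [LinearOrder α] [IsOrderedAddMonoid α] (x y : Fin n → α) : Prop :=
  (∀ k : ℕ, psum (sortDesc x) k ≤ psum (sortDesc y) k) ∧ (∑ i, x i) = ∑ i, y i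

/-- Weak submajorization: the sum of the `k` largest entries of `x` is at most
that of `y`, for every `k`. -/
def WeakSub {n : ℕ} {α : Type*} [AddCommMonoid α] [LinearOrder α] [IsOrderedAddMonoid α] (x y : Fin n → α) : Prop :=
  ∀ k : ℕ, psum (sortDesc x) k ≤ psum (sortDesc y) k

/-- Weak supermajorization: the sum of the `k` smallest entries of `x` is at least
that of `y`, for every `k`. -/
def WeakSuper {n : ℕ} {α : Type*} [AddCommMonoid α] [LinearOrder α] [IsOrderedAddMonoid α] (x y : Fin n → α) : Prop :=
  ∀ k : ℕ, psum (sortAsc y) k ≤ psum (sortAsc x) k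

/-- Dominance order for (sorted) vectors: all leading partial sums compare. -/
def Dom {n : ℕ} (x y : Fin n → ℕ) : Prop :=
  ∀ k : ℕ, psum x k ≤ psum y k

/-- The candidate meet, defined via componentwise minima of leading partial sums. -/
def meetP {n : ℕ} (x y : Fin n → ℕ) : Fin n → ℕ :=
  fun k => min (psum x ((k : ℕ) + 1)) (psum y ((k : ℕ) + 1))
      - min (psum x (k : ℕ)) (psum y (k : ℕ))

lemma psum_zero {n : ℕ} (f : Fin n → ℕ) : psum f 0 = 0 := by simp [psum]

lemma psum_succ {n : ℕ} (f : Fin n → ℕ) (k : ℕ) :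
    psum f (k+1) = psum f k + (if h : k < n then f ⟨k, h⟩ else 0) := by
  classical
  unfold psum
  have h1 : ∀ i : Fin n, (if (i:ℕ) < k+1 then f i else 0)
      = (if (i:ℕ) < k then f i else 0) + (if (i:ℕ) = k then f i else 0) := by
    intro i; split_ifs <;> simp_all <;> omega
  rw [Finset.sum_congr rfl (fun i _ => h1 i), Finset.sum_add_distrib]
  congr 1
  by_cases h : k < n
  · rw [dif_pos h]
    have : ∀ i : Fin n, ((i:ℕ) = k) = (i = ⟨k, h⟩) := by
      intro i; simp [Fin.ext_iff]
    simp_rw [this]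
    simp
  · rw [dif_neg h]
    apply Finset.sum_eq_zero
    intro i _
    exact if_neg (fun hik => h (by omega))

lemma psum_mono {n : ℕ} (f : Fin n → ℕ) : Monotone (psum f) := by
  intro a b hab
  apply Finset.sum_le_sum
  intro i _
  split_ifs <;> omega

lemma psum_total {n : ℕ} (f : Fin n → ℕ) {k : ℕ} (h : n ≤ k) :
    psum f k = ∑ i, f i := by
  unfold psum
  apply Finset.sum_congr rfl
  intro i _
  exact if_pos (lt_of_lt_of_le i.isLt h)

/-- the "step" of an antitone vector, as a function on ℕ -/
lemma step_antitone {n : ℕ} (x : Fin n → ℕ) (hx : Antitone x) :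
    Antitone (fun k => if h : k < n then x ⟨k, h⟩ else 0) := by
  intro a b hab
  by_cases hb : b < n
  · have ha : a < n := lt_of_le_of_lt hab hb
    simp only [dif_pos ha, dif_pos hb]
    exact hx (by exact hab)
  · simp only [dif_neg hb]
    positivity

theorem stmt_13 {n τ : ℕ} (x y : Fin n → ℕ)
    (hx : Antitone x) (hy : Antitone y)
    (hxs : ∑ i, x i = τ) (hys : ∑ i, y i = τ) :
    Antitone (meetP x y) ∧ (∑ i, meetP x y i = τ) ∧
      Dom (meetP x y) x ∧ Dom (meetP x y) y ∧
      ∀ w : Fin n → ℕ, Antitone w → (∑ i, w i = τ) →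
        Dom w x → Dom w y → Dom w (meetP x y) := by
  set M : ℕ → ℕ := fun k => min (psum x k) (psum y k) with hM
  have hMmono : Monotone M := fun a b hab =>
    min_le_min (psum_mono x hab) (psum_mono y hab)
  -- concavity of psum for x and y
  have hconc : ∀ f : Fin n → ℕ, Antitone f →
      ∀ k, psum f k + psum f (k+2) ≤ psum f (k+1) + psum f (k+1) := by
    intro f hf k
    have h1 : psum f (k+1) = psum f k + (if h : k < n then f ⟨k, h⟩ else 0) :=
      psum_succ f k
    have h2 : psum f (k+2) = psum f (k+1) + (if h : k+1 < n then f ⟨k+1, h⟩ else 0) :=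
      psum_succ f (k+1)
    have h3 : (if h : k+1 < n then f ⟨k+1, h⟩ else 0) ≤ (if h : k < n then f ⟨k, h⟩ else 0) :=
      step_antitone f hf (Nat.le_succ k)
    omega
  -- concavity of M
  have hMconc : ∀ k, M k + M (k+2) ≤ M (k+1) + M (k+1) := by
    intro k
    rcases le_total (psum x (k+1)) (psum y (k+1)) with h | h
    · have hMk1 : M (k+1) = psum x (k+1) := min_eq_left h
      have := hconc x hx k
      have h1 : M k ≤ psum x k := min_le_left _ _
      have h2 : M (k+2) ≤ psum x (k+2) := min_le_left _ _
      omega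
    · have hMk1 : M (k+1) = psum y (k+1) := min_eq_right h
      have := hconc y hy k
      have h1 : M k ≤ psum y k := min_le_right _ _
      have h2 : M (k+2) ≤ psum y (k+2) := min_le_right _ _
      omega
  -- g : the successive differences of M
  set g : ℕ → ℕ := fun k => M (k+1) - M k with hg
  have hganti : Antitone g := by
    apply antitone_nat_of_succ_le
    intro k
    show M (k+1+1) - M (k+1) ≤ M (k+1) - M k
    have h1 : M k + M (k+1+1) ≤ M (k+1) + M (k+1) := hMconc k
    have h2 : M k ≤ M (k+1) := hMmono (by omega)
    have h3 : M (k+1) ≤ M (k+1+1) := hMmono (by omega)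
    omega
  have hmg : ∀ i : Fin n, meetP x y i = g (i : ℕ) := fun i => rfl
  have hanti : Antitone (meetP x y) := by
    intro a b hab
    rw [hmg, hmg]
    exact hganti (by exact_mod_cast hab)
  -- partial sums of the meet
  have hpm : ∀ k, psum (meetP x y) k = M (min k n) := by
    intro k
    induction k with
    | zero => simp [psum_zero, hM, psum_zero]
    | succ k ih =>
      rw [psum_succ, ih]
      by_cases h : k < n
      · rw [dif_pos h, hmg, min_eq_left h.le, min_eq_left (Nat.succ_le_of_lt h)]
        show M k + (M (k+1) - M k) = M (k+1)
        have h2 : M k ≤ M (k+1) := hMmono (by omega)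
        omega
      · rw [dif_neg h, min_eq_right (by omega : n ≤ k),
          min_eq_right (by omega : n ≤ k+1), add_zero]
  have hMn : M n = τ := by
    simp only [hM]
    rw [psum_total x le_rfl, psum_total y le_rfl, hxs, hys, min_self]
  have hsum : ∑ i, meetP x y i = τ := by
    rw [← psum_total (meetP x y) (le_refl n), hpm, min_self, hMn]
  refine ⟨hanti, hsum, ?_, ?_, ?_⟩
  · intro k
    rw [hpm]
    exact le_trans (min_le_left _ _) (psum_mono x (min_le_left k n))
  · intro k
    rw [hpm]
    exact le_trans (min_le_right _ _) (psum_mono y (min_le_left k n))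
  · intro w hw hws hwx hwy k
    rw [hpm]
    by_cases h : k ≤ n
    · rw [min_eq_left h]
      exact le_min (hwx k) (hwy k)
    · rw [min_eq_right (by omega)]
      rw [psum_total w (by omega), hws, hMn]
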